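/- For every n ≥ 4: (a) the set Λ' = {(1jkl) : 2 ≤ j < k < l ≤ n} generates the group Δ_n^4; (b) every generating set of Δ_n^4 has at least N'_n = C(n−1,3) elements, so Λ' is a minimal generating set; and (c) the abelianization of Δ_n^4 is isomorphic to (ℤ/2ℤ)^{N'_n}. -/

import Mathlib

open Multiplicative

lemma zmod2_add_self (a : ZMod 2) : a + a = 0 := by revert a; decide

lemma zmod2_natCast_val (a : ZMod 2) : ((a.val : ℕ) : ZMod 2) = a := by revert a; decide

lemma sq_one_pow {M : Type*} [Monoid M] {x : M} (hx : x * x = 1) (m : ℕ) :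
    x ^ m = x ^ (m % 2) := by
  conv_lhs => rw [← Nat.div_add_mod m 2, pow_add, pow_mul, pow_two, hx, one_pow, one_mul]

lemma pow_val_add {M : Type*} [Monoid M] {x : M} (hx : x * x = 1) (a b : ZMod 2) :
    x ^ (a + b).val = x ^ a.val * x ^ b.val := by
  rw [ZMod.val_add, ← sq_one_pow hx, pow_add]

variable {κ M : Type*} [Fintype κ] [DecidableEq κ] [CommGroup M]

/-- The homomorphism `(ZMod 2)^κ → M` sending the `i`-th basis vector to `x i`. -/
def Psi (x : κ → M) (hx : ∀ i, x i * x i = 1) : Multiplicative (κ → ZMod 2) →* M where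
  toFun f := ∏ i, x i ^ (Multiplicative.toAdd f i).val
  map_one' := by simp
  map_mul' f g := by
    rw [← Finset.prod_mul_distrib]
    exact Finset.prod_congr rfl fun i _ => pow_val_add (hx i) _ _

lemma Psi_apply (x : κ → M) (hx : ∀ i, x i * x i = 1) (f : Multiplicative (κ → ZMod 2)) :
    Psi x hx f = ∏ i, x i ^ (Multiplicative.toAdd f i).val := rfl

lemma Psi_single (x : κ → M) (hx : ∀ i, x i * x i = 1) (i : κ) :
    Psi x hx (Multiplicative.ofAdd (Pi.single i 1)) = x i := by
  rw [Psi_apply, Finset.prod_eq_single i]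
  · simp [ZMod.val_one]
  · intro j _ hj
    simp [Pi.single_eq_of_ne hj]
  · simp

lemma closure_range_eq_range_Psi (x : κ → M) (hx : ∀ i, x i * x i = 1) :
    Subgroup.closure (Set.range x) = (Psi x hx).range := by
  apply le_antisymm
  · rw [Subgroup.closure_le]
    rintro - ⟨i, rfl⟩
    exact MonoidHom.mem_range.mpr ⟨Multiplicative.ofAdd (Pi.single i 1), Psi_single x hx i⟩
  · rintro - ⟨f, rfl⟩
    rw [Psi_apply]
    exact Subgroup.prod_mem _ fun i _ =>
      Subgroup.pow_mem _ (Subgroup.subset_closure (Set.mem_range_self i)) _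

lemma mul_self_pi_zmod2 {A : Type*} (a : Multiplicative (A → ZMod 2)) : a * a = 1 := by
  apply Multiplicative.toAdd.injective
  funext i
  exact zmod2_add_self _

lemma prod_single_pow (f : Multiplicative (κ → ZMod 2)) :
    ∏ i, (Multiplicative.ofAdd (Pi.single i (1 : ZMod 2) : κ → ZMod 2)) ^ (Multiplicative.toAdd f i).val
      = f := by
  apply Multiplicative.toAdd.injective
  rw [toAdd_prod]
  have : ∀ i : κ, Multiplicative.toAdd
      ((Multiplicative.ofAdd (Pi.single i (1 : ZMod 2) : κ → ZMod 2)) ^ (Multiplicative.toAdd f i).val)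
      = Pi.single i (Multiplicative.toAdd f i) := by
    intro i
    rw [toAdd_pow, toAdd_ofAdd]
    funext j
    rcases eq_or_ne j i with rfl | hj
    · simp [zmod2_natCast_val]
    · simp [Pi.single_eq_of_ne hj]
  rw [Finset.sum_congr rfl fun i _ => this i, Finset.univ_sum_single]

lemma Psi_pi (f : Multiplicative (κ → ZMod 2)) :
    Psi (fun i : κ => Multiplicative.ofAdd (Pi.single i (1 : ZMod 2) : Multiplicative (κ → ZMod 2)))
      (fun i => mul_self_pi_zmod2 _) f = f := by
  rw [Psi_apply]; exact prod_single_pow f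

/-- Reindexing equiv. -/
def reindexMul {A B : Type*} (σ : A ≃ B) :
    Multiplicative (A → ZMod 2) ≃* Multiplicative (B → ZMod 2) where
  toFun f := Multiplicative.ofAdd fun b => Multiplicative.toAdd f (σ.symm b)
  invFun f := Multiplicative.ofAdd fun a => Multiplicative.toAdd f (σ a)
  left_inv f := by simp
  right_inv f := by simp
  map_mul' f g := rfl


/-- Ordered quadruples of elements of `Fin n`, used to index the generators `(ijkl)`. -/
abbrev Quad (n : ℕ) : Type := Fin n × Fin n × Fin n × Fin n

/-- The underlying set `{i, j, k, l}` of a quadruple `(i, j, k, l)`. -/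
def qFinset {n : ℕ} (q : Quad n) : Finset (Fin n) := {q.1, q.2.1, q.2.2.1, q.2.2.2}

/-- The quadruple `(i, j, k, l)` is strictly increasing: `i < j < k < l`. -/
def qInc {n : ℕ} (q : Quad n) : Prop := q.1 < q.2.1 ∧ q.2.1 < q.2.2.1 ∧ q.2.2.1 < q.2.2.2

/-- The defining relators of the group `Δ_n^4` (the increasing-order version of `Γ_n^4`):
generators indexed by strictly increasing quadruples (other quadruples are killed),
involutive relations (1), commutativity relations (2) and pentagon relations (3) for
`i < j < k < l < m`. -/
def deltaRels (n : ℕ) : Set (FreeGroup (Quad n)) :=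
  {w | ∃ q : Quad n, ¬ qInc q ∧ w = FreeGroup.of q} ∪
  {w | ∃ q : Quad n, qInc q ∧ w = FreeGroup.of q * FreeGroup.of q} ∪
  {w | ∃ q r : Quad n, qInc q ∧ qInc r ∧ (qFinset q ∩ qFinset r).card ≤ 2 ∧
      w = FreeGroup.of q * FreeGroup.of r * (FreeGroup.of q)⁻¹ * (FreeGroup.of r)⁻¹} ∪
  {w | ∃ i j k l m : Fin n, i < j ∧ j < k ∧ k < l ∧ l < m ∧
      w = FreeGroup.of (i, j, k, l) * FreeGroup.of (i, j, l, m) * FreeGroup.of (j, k, l, m) *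
        FreeGroup.of (i, j, k, m) * FreeGroup.of (i, k, l, m)}

/-- The group `Δ_n^4`, the increasing-order version of `Γ_n^4`. -/
abbrev Delta (n : ℕ) : Type := PresentedGroup (deltaRels n)

/-- The generator `(ijkl)` of `Δ_n^4`. -/
def dd {n : ℕ} (q : Quad n) : Delta n := PresentedGroup.of q
/-- The set `Λ' = {(1jkl) : 2 ≤ j < k < l ≤ n}` of generators of `Δ_n^4` (with 0-based
indices, so the paper's index `1` is `0`). -/
def LambdaDelta (n : ℕ) : Set (Delta n) :=
  {x | ∃ a j k l : Fin n, (a : ℕ) = 0 ∧ a < j ∧ j < k ∧ k < l ∧ x = dd (a, j, k, l)}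


namespace DeltaAux

variable {n : ℕ}

lemma relator_one {r : FreeGroup (Quad n)} (h : r ∈ deltaRels n) :
    PresentedGroup.mk (deltaRels n) r = 1 := by
  exact (QuotientGroup.eq_one_iff r).mpr (Subgroup.subset_normalClosure h)

lemma dd_eq_mk (q : Quad n) : dd q = PresentedGroup.mk (deltaRels n) (FreeGroup.of q) := rfl

lemma dd_not_inc {q : Quad n} (h : ¬ qInc q) : dd q = 1 :=
  relator_one (Or.inl (Or.inl (Or.inl ⟨q, h, rfl⟩)))

lemma dd_sq (q : Quad n) : dd q * dd q = 1 := by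
  by_cases h : qInc q
  · rw [dd_eq_mk, ← map_mul]
    exact relator_one (Or.inl (Or.inl (Or.inr ⟨q, h, rfl⟩)))
  · rw [dd_not_inc h, one_mul]

lemma dd_pentagon {i j k l m : Fin n} (h1 : i < j) (h2 : j < k) (h3 : k < l) (h4 : l < m) :
    dd (i, j, k, l) * dd (i, j, l, m) * dd (j, k, l, m) * dd (i, j, k, m) * dd (i, k, l, m)
      = 1 := by
  simp only [dd_eq_mk, ← map_mul]
  exact relator_one (Or.inr ⟨i, j, k, l, m, h1, h2, h3, h4, rfl⟩)

end DeltaAux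

namespace DeltaAux

variable {n : ℕ}

instance (q : Quad n) : Decidable (qInc q) :=
  inferInstanceAs (Decidable (_ ∧ _ ∧ _))

lemma card_triple {a b c : Fin n} (h1 : a < b) (h2 : b < c) :
    ({a, b, c} : Finset (Fin n)).card = 3 := by
  rw [Finset.card_insert_of_notMem (by simp [h1.ne, (h1.trans h2).ne]),
    Finset.card_insert_of_notMem (by simp [h2.ne]), Finset.card_singleton]

lemma cond_val {T S R : Finset (Fin n)} {c : Fin n} (hTS : T ⊆ S) (hcR : c ∉ R)
    (hS : insert c R = S) :
    (if T ⊆ R then (1 : ZMod 2) else 0) = 1 + (if c ∈ T then 1 else 0) := by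
  by_cases hc : c ∈ T
  · rw [if_pos hc, if_neg fun hsub => hcR (hsub hc)]
    decide
  · rw [if_neg hc, if_pos ((Finset.subset_insert_iff_of_notMem hc).mp (hS ▸ hTS))]
    norm_num

lemma cond_val0 {T S R : Finset (Fin n)} {c : Fin n} (hTS : ¬ T ⊆ S) (hS : insert c R = S) :
    (if T ⊆ R then (1 : ZMod 2) else 0) = 0 :=
  if_neg fun h => hTS (hS ▸ h.trans (Finset.subset_insert c R))

section Idx

variable [NeZero n]

abbrev Idx (n : ℕ) [NeZero n] : Type := {T : Finset (Fin n) // T.card = 3 ∧ (0 : Fin n) ∉ T}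

def mkIdx {a b c : Fin n} (h0 : 0 < a) (h1 : a < b) (h2 : b < c) : Idx n :=
  ⟨{a, b, c}, card_triple h1 h2,
    by simp [h0.ne, (h0.trans h1).ne, (h0.trans (h1.trans h2)).ne]⟩

lemma cardIdx (n : ℕ) [NeZero n] : Fintype.card (Idx n) = (n - 1).choose 3 := by
  rw [Fintype.card_subtype]
  have : Finset.univ.filter (fun T : Finset (Fin n) => T.card = 3 ∧ (0 : Fin n) ∉ T)
      = (Finset.univ.erase (0 : Fin n)).powersetCard 3 := by
    ext T
    simp only [Finset.mem_filter, Finset.mem_univ, true_and, Finset.mem_powersetCard,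
      Finset.subset_erase, Finset.subset_univ, true_and]
    tauto
  rw [this, Finset.card_powersetCard, Finset.card_erase_of_mem (Finset.mem_univ _),
    Finset.card_univ, Fintype.card_fin]

/-- The value of the generator `q` under the abelianization map, as an element of
`(ZMod 2)^(Idx n)`. -/
def fgen (n : ℕ) [NeZero n] (q : Quad n) : Multiplicative (Idx n → ZMod 2) :=
  Multiplicative.ofAdd fun T => if qInc q ∧ (T : Finset (Fin n)) ⊆ qFinset q then 1 else 0

lemma fgen_not_inc {q : Quad n} (h : ¬ qInc q) : fgen n q = 1 := by
  have hz : (fun T : Idx n => if qInc q ∧ (T : Finset (Fin n)) ⊆ qFinset q then (1 : ZMod 2)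
      else 0) = fun _ => 0 := by
    funext T
    rw [if_neg fun hc => h hc.1]
  rw [fgen, hz]
  rfl

lemma fgen_inc {q : Quad n} (h : qInc q) :
    fgen n q = Multiplicative.ofAdd
      fun T : Idx n => if (T : Finset (Fin n)) ⊆ qFinset q then 1 else 0 := by
  simp [fgen, h]

lemma fgen_zero {a b c : Fin n} (h0 : 0 < a) (h1 : a < b) (h2 : b < c) :
    fgen n ((0 : Fin n), a, b, c)
      = Multiplicative.ofAdd (Pi.single (mkIdx h0 h1 h2) (1 : ZMod 2)) := by
  have hq : qInc ((0 : Fin n), a, b, c) := ⟨h0, h1, h2⟩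
  rw [fgen_inc hq]
  congr 1
  funext T
  rw [Pi.single_apply]
  refine if_congr ?_ rfl rfl
  constructor
  · intro hsub
    have h1' : (T : Finset (Fin n)) ⊆ {a, b, c} :=
      (Finset.subset_insert_iff_of_notMem T.2.2).mp hsub
    have h2' : (T : Finset (Fin n)) = {a, b, c} :=
      Finset.eq_of_subset_of_card_le h1' (by rw [card_triple h1 h2, T.2.1])
    exact Subtype.ext h2'
  · rintro rfl
    exact Finset.subset_insert _ _

end Idx

lemma fgen_rels (n : ℕ) [NeZero n] :
    ∀ r ∈ deltaRels n, FreeGroup.lift (fgen n) r = 1 := by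
  intro r hr
  rcases hr with ((⟨q, hq, rfl⟩ | ⟨q, hq, rfl⟩) | ⟨q, s, hq, hs, hcard, rfl⟩) |
    ⟨i, j, k, l, m, h1, h2, h3, h4, rfl⟩
  · rw [FreeGroup.lift_apply_of]
    exact fgen_not_inc hq
  · rw [map_mul, FreeGroup.lift_apply_of]
    exact mul_self_pi_zmod2 _
  · simp only [map_mul, map_inv, FreeGroup.lift_apply_of]
    exact commutatorElement_eq_one_iff_mul_comm.mpr (mul_comm _ _)
  · -- pentagon relation
    obtain ⟨hij, hik, hil, him, hjk, hjl, hjm, hkl, hkm, hlm⟩ :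
        i ≠ j ∧ i ≠ k ∧ i ≠ l ∧ i ≠ m ∧ j ≠ k ∧ j ≠ l ∧ j ≠ m ∧ k ≠ l ∧ k ≠ m ∧ l ≠ m :=
      ⟨h1.ne, (h1.trans h2).ne, (h1.trans (h2.trans h3)).ne,
        (h1.trans (h2.trans (h3.trans h4))).ne, h2.ne, (h2.trans h3).ne,
        (h2.trans (h3.trans h4)).ne, h3.ne, (h3.trans h4).ne, h4.ne⟩
    have hq1 : qInc (i, j, k, l) := ⟨h1, h2, h3⟩
    have hq2 : qInc (i, j, l, m) := ⟨h1, h2.trans h3, h4⟩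
    have hq3 : qInc (j, k, l, m) := ⟨h2, h3, h4⟩
    have hq4 : qInc (i, j, k, m) := ⟨h1, h2, h3.trans h4⟩
    have hq5 : qInc (i, k, l, m) := ⟨h1.trans h2, h3, h4⟩
    simp only [map_mul, FreeGroup.lift_apply_of, fgen_inc hq1, fgen_inc hq2, fgen_inc hq3,
      fgen_inc hq4, fgen_inc hq5, ← ofAdd_add]
    rw [show (1 : Multiplicative (Idx n → ZMod 2)) = Multiplicative.ofAdd 0 from rfl]
    congr 1
    funext T
    -- the five underlying 4-sets, as `insert c R = S` identities
    have e1 : insert m ({i, j, k, l} : Finset (Fin n)) = {i, j, k, l, m} := by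
      ext x; simp only [Finset.mem_insert, Finset.mem_singleton]; tauto
    have e2 : insert k ({i, j, l, m} : Finset (Fin n)) = {i, j, k, l, m} := by
      ext x; simp only [Finset.mem_insert, Finset.mem_singleton]; tauto
    have e3 : insert i ({j, k, l, m} : Finset (Fin n)) = {i, j, k, l, m} := rfl
    have e4 : insert l ({i, j, k, m} : Finset (Fin n)) = {i, j, k, l, m} := by
      ext x; simp only [Finset.mem_insert, Finset.mem_singleton]; tauto
    have e5 : insert j ({i, k, l, m} : Finset (Fin n)) = {i, j, k, l, m} := by
      ext x; simp only [Finset.mem_insert, Finset.mem_singleton]; tauto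
    have n1 : m ∉ ({i, j, k, l} : Finset (Fin n)) := by simp [him.symm, hjm.symm, hkm.symm, hlm.symm]
    have n2 : k ∉ ({i, j, l, m} : Finset (Fin n)) := by simp [hik.symm, hjk.symm, hkl, hkm]
    have n3 : i ∉ ({j, k, l, m} : Finset (Fin n)) := by simp [hij, hik, hil, him]
    have n4 : l ∉ ({i, j, k, m} : Finset (Fin n)) := by simp [hil.symm, hjl.symm, hkl.symm, hlm]
    have n5 : j ∉ ({i, k, l, m} : Finset (Fin n)) := by simp [hij.symm, hjk, hjl, hjm]
    simp only [Pi.add_apply, Pi.zero_apply,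
      show qFinset (i, j, k, l) = ({i, j, k, l} : Finset (Fin n)) from rfl,
      show qFinset (i, j, l, m) = ({i, j, l, m} : Finset (Fin n)) from rfl,
      show qFinset (j, k, l, m) = ({j, k, l, m} : Finset (Fin n)) from rfl,
      show qFinset (i, j, k, m) = ({i, j, k, m} : Finset (Fin n)) from rfl,
      show qFinset (i, k, l, m) = ({i, k, l, m} : Finset (Fin n)) from rfl]
    by_cases hTS : (T : Finset (Fin n)) ⊆ ({i, j, k, l, m} : Finset (Fin n))
    · rw [cond_val hTS n1 e1, cond_val hTS n2 e2, cond_val hTS n3 e3, cond_val hTS n4 e4,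
        cond_val hTS n5 e5]
      have hsum : (if m ∈ (T : Finset (Fin n)) then (1 : ZMod 2) else 0)
          + (if k ∈ (T : Finset (Fin n)) then 1 else 0)
          + (if i ∈ (T : Finset (Fin n)) then 1 else 0)
          + (if l ∈ (T : Finset (Fin n)) then 1 else 0)
          + (if j ∈ (T : Finset (Fin n)) then 1 else 0) = 1 := by
        have expand : ∑ c ∈ ({i, j, k, l, m} : Finset (Fin n)),
            (if c ∈ (T : Finset (Fin n)) then (1 : ZMod 2) else 0)
            = (if i ∈ (T : Finset (Fin n)) then (1 : ZMod 2) else 0)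
            + ((if j ∈ (T : Finset (Fin n)) then 1 else 0)
            + ((if k ∈ (T : Finset (Fin n)) then 1 else 0)
            + ((if l ∈ (T : Finset (Fin n)) then 1 else 0)
            + (if m ∈ (T : Finset (Fin n)) then 1 else 0)))) := by
          rw [Finset.sum_insert (by simp [hij, hik, hil, him]),
            Finset.sum_insert (by simp [hjk, hjl, hjm]),
            Finset.sum_insert (by simp [hkl, hkm]),
            Finset.sum_insert (by simp [hlm]), Finset.sum_singleton]
        have card3 : ∑ c ∈ ({i, j, k, l, m} : Finset (Fin n)),
            (if c ∈ (T : Finset (Fin n)) then (1 : ZMod 2) else 0) = 3 := by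
          rw [Finset.sum_boole, Finset.filter_mem_eq_inter,
            Finset.inter_eq_right.mpr hTS, T.2.1]
          norm_num
        rw [expand] at card3
        have two : (2 : ZMod 2) = 0 := by decide
        linear_combination card3 + two
      have two : (2 : ZMod 2) = 0 := by decide
      linear_combination hsum + 3 * two
    · rw [cond_val0 hTS e1, cond_val0 hTS e2, cond_val0 hTS e3, cond_val0 hTS e4,
        cond_val0 hTS e5]
      norm_num

end DeltaAux

namespace DeltaAux

variable {n : ℕ} [NeZero n]

def phi (n : ℕ) [NeZero n] : Delta n →* Multiplicative (Idx n → ZMod 2) :=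
  PresentedGroup.toGroup (fgen_rels n)

lemma phi_of (q : Quad n) : phi n (dd q) = fgen n q := PresentedGroup.toGroup.of _

/-- The increasing enumeration of a 3-element subset. -/
def idxE (T : Idx n) : Fin 3 ↪o Fin n := T.1.orderEmbOfFin T.2.1

lemma idxE_mem (T : Idx n) (i : Fin 3) : idxE T i ∈ T.1 := Finset.orderEmbOfFin_mem _ _ _

lemma idxE_pos (T : Idx n) (i : Fin 3) : 0 < idxE T i :=
  lt_of_le_of_ne (Fin.zero_le _) fun h => absurd (idxE_mem T i) (by rw [← h]; exact T.2.2)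

lemma idxE_lt (T : Idx n) : idxE T 0 < idxE T 1 ∧ idxE T 1 < idxE T 2 :=
  ⟨(idxE T).strictMono (by decide), (idxE T).strictMono (by decide)⟩

def idxQuad (T : Idx n) : Quad n := (0, idxE T 0, idxE T 1, idxE T 2)

lemma idxQuad_inc (T : Idx n) : qInc (idxQuad T) :=
  ⟨idxE_pos T 0, (idxE_lt T).1, (idxE_lt T).2⟩

lemma idxE_finset (T : Idx n) : ({idxE T 0, idxE T 1, idxE T 2} : Finset (Fin n)) = T.1 := by
  apply Finset.eq_of_subset_of_card_le
  · simp only [Finset.insert_subset_iff, Finset.singleton_subset_iff]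
    exact ⟨idxE_mem T 0, idxE_mem T 1, idxE_mem T 2⟩
  · rw [T.2.1, card_triple (idxE_lt T).1 (idxE_lt T).2]

lemma mkIdx_idxE (T : Idx n) :
    mkIdx (idxE_pos T 0) (idxE_lt T).1 (idxE_lt T).2 = T :=
  Subtype.ext (idxE_finset T)

lemma phi_g (T : Idx n) :
    phi n (dd (idxQuad T)) = Multiplicative.ofAdd (Pi.single T (1 : ZMod 2)) := by
  rw [phi_of, idxQuad, fgen_zero (idxE_pos T 0) (idxE_lt T).1 (idxE_lt T).2, mkIdx_idxE]

lemma idxQuad_mk {a b c : Fin n} (h0 : 0 < a) (h1 : a < b) (h2 : b < c) :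
    idxQuad (mkIdx h0 h1 h2) = ((0 : Fin n), a, b, c) := by
  have hu : ![a, b, c] = ⇑(({a, b, c} : Finset (Fin n)).orderEmbOfFin (card_triple h1 h2)) := by
    apply Finset.orderEmbOfFin_unique
    · intro i; fin_cases i <;> simp
    · intro i j hij
      fin_cases i <;> fin_cases j <;>
        first
          | exact absurd hij (by decide)
          | simpa using h1
          | simpa using h2
          | simpa using h1.trans h2
  have he : ∀ i : Fin 3, idxE (mkIdx h0 h1 h2) i = ![a, b, c] i := fun i =>
    (congrFun hu i).symm
  show ((0 : Fin n), idxE (mkIdx h0 h1 h2) 0, idxE (mkIdx h0 h1 h2) 1,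
      idxE (mkIdx h0 h1 h2) 2) = ((0 : Fin n), a, b, c)
  rw [he 0, he 1, he 2]
  simp

end DeltaAux

namespace DeltaAux

variable {n : ℕ} [NeZero n]

lemma card_quad {a b c d : Fin n} (h1 : a < b) (h2 : b < c) (h3 : c < d) :
    ({a, b, c, d} : Finset (Fin n)).card = 4 := by
  rw [Finset.card_insert_of_notMem
      (by simp [h1.ne, (h1.trans h2).ne, (h1.trans (h2.trans h3)).ne]),
    card_triple h2 h3]

lemma fgen_pos {i j k l : Fin n} (h0 : 0 < i) (h1 : i < j) (h2 : j < k) (h3 : k < l) :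
    fgen n (i, j, k, l) = Multiplicative.ofAdd
      (Pi.single (mkIdx h0 h1 h2) (1 : ZMod 2) + Pi.single (mkIdx h0 h1 (h2.trans h3)) 1
        + Pi.single (mkIdx h0 (h1.trans h2) h3) 1 + Pi.single (mkIdx (h0.trans h1) h2 h3) 1) := by
  set A := mkIdx h0 h1 h2 with hA
  set B := mkIdx h0 h1 (h2.trans h3) with hB
  set C := mkIdx h0 (h1.trans h2) h3 with hC
  set D := mkIdx (h0.trans h1) h2 h3 with hD
  obtain ⟨hij, hik, hil, hjk, hjl, hkl⟩ : i ≠ j ∧ i ≠ k ∧ i ≠ l ∧ j ≠ k ∧ j ≠ l ∧ k ≠ l :=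
    ⟨h1.ne, (h1.trans h2).ne, (h1.trans (h2.trans h3)).ne, h2.ne, (h2.trans h3).ne, h3.ne⟩
  have hAB : A ≠ B := fun h => by
    have := congrArg (fun X : Idx n => l ∈ (X : Finset (Fin n))) h
    simp [hA, hB, mkIdx, hil.symm, hjl.symm, hkl.symm] at this
  have hAC : A ≠ C := fun h => by
    have := congrArg (fun X : Idx n => j ∈ (X : Finset (Fin n))) h
    simp [hA, hC, mkIdx, hij.symm, hjk, hjl] at this
  have hAD : A ≠ D := fun h => by
    have := congrArg (fun X : Idx n => i ∈ (X : Finset (Fin n))) h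
    simp [hA, hD, mkIdx, hij, hik, hil] at this
  have hBC : B ≠ C := fun h => by
    have := congrArg (fun X : Idx n => j ∈ (X : Finset (Fin n))) h
    simp [hB, hC, mkIdx, hij.symm, hjk, hjl] at this
  have hBD : B ≠ D := fun h => by
    have := congrArg (fun X : Idx n => i ∈ (X : Finset (Fin n))) h
    simp [hB, hD, mkIdx, hij, hik, hil] at this
  have hCD : C ≠ D := fun h => by
    have := congrArg (fun X : Idx n => i ∈ (X : Finset (Fin n))) h
    simp [hC, hD, mkIdx, hij, hik, hil] at this
  have hq : qInc (i, j, k, l) := ⟨h1, h2, h3⟩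
  rw [fgen_inc hq]
  congr 1
  funext T
  simp only [Pi.add_apply, Pi.single_apply]
  have hsubA : (A : Finset (Fin n)) ⊆ ({i, j, k, l} : Finset (Fin n)) := by
    simp [hA, mkIdx, Finset.insert_subset_iff]
  have hsubB : (B : Finset (Fin n)) ⊆ ({i, j, k, l} : Finset (Fin n)) := by
    simp [hB, mkIdx, Finset.insert_subset_iff]
  have hsubC : (C : Finset (Fin n)) ⊆ ({i, j, k, l} : Finset (Fin n)) := by
    simp [hC, mkIdx, Finset.insert_subset_iff]
  have hsubD : (D : Finset (Fin n)) ⊆ ({i, j, k, l} : Finset (Fin n)) := by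
    simp [hD, mkIdx, Finset.insert_subset_iff]
  show (if (T : Finset (Fin n)) ⊆ qFinset (i, j, k, l) then (1 : ZMod 2) else 0)
      = (if T = A then 1 else 0) + (if T = B then 1 else 0) + (if T = C then 1 else 0)
        + (if T = D then 1 else 0)
  have hqf : qFinset (i, j, k, l) = ({i, j, k, l} : Finset (Fin n)) := rfl
  rw [hqf]
  by_cases hsub : (T : Finset (Fin n)) ⊆ ({i, j, k, l} : Finset (Fin n))
  · have hdiff : (({i, j, k, l} : Finset (Fin n)) \ (T : Finset (Fin n))).card = 1 := by
      rw [Finset.card_sdiff_of_subset hsub, card_quad h1 h2 h3, T.2.1]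
    obtain ⟨c, hc⟩ := Finset.card_eq_one.mp hdiff
    have hcS : c ∈ ({i, j, k, l} : Finset (Fin n)) :=
      (Finset.mem_sdiff.mp (hc ▸ Finset.mem_singleton_self c)).1
    have hcT : c ∉ (T : Finset (Fin n)) :=
      (Finset.mem_sdiff.mp (hc ▸ Finset.mem_singleton_self c)).2
    have hT : (T : Finset (Fin n)) = ({i, j, k, l} : Finset (Fin n)).erase c := by
      apply Finset.eq_of_subset_of_card_le
      · intro x hx
        exact Finset.mem_erase.mpr ⟨fun hxc => hcT (hxc ▸ hx), hsub hx⟩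
      · rw [Finset.card_erase_of_mem hcS, card_quad h1 h2 h3, T.2.1]
    rw [if_pos hsub]
    rcases Finset.mem_insert.mp hcS with hci | hcS'
    · -- c = i, T = {j,k,l} = D
      have hT' : (T : Finset (Fin n)) = {j, k, l} := by
        rw [hT, hci, Finset.erase_insert (by simp [hij, hik, hil])]
      have hTD : T = D := Subtype.ext (by rw [hT']; rfl)
      rw [if_neg (by rw [hTD]; exact hAD.symm), if_neg (by rw [hTD]; exact hBD.symm),
        if_neg (by rw [hTD]; exact hCD.symm), if_pos hTD]
      norm_num
    · rcases Finset.mem_insert.mp hcS' with hcj | hcS''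
      · -- c = j, T = {i,k,l} = C
        have hT' : (T : Finset (Fin n)) = {i, k, l} := by
          rw [hT, hcj, Finset.erase_insert_of_ne hij,
            Finset.erase_insert (by simp [hjk, hjl])]
        have hTC : T = C := Subtype.ext (by rw [hT']; rfl)
        rw [if_neg (by rw [hTC]; exact hAC.symm), if_neg (by rw [hTC]; exact hBC.symm),
          if_pos hTC, if_neg (by rw [hTC]; exact hCD)]
        norm_num
      · rcases Finset.mem_insert.mp hcS'' with hck | hcS'''
        · -- c = k, T = {i,j,l} = B
          have hT' : (T : Finset (Fin n)) = {i, j, l} := by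
            rw [hT, hck, Finset.erase_insert_of_ne hik,
              Finset.erase_insert_of_ne hjk, Finset.erase_insert (by simp [hkl])]
          have hTB : T = B := Subtype.ext (by rw [hT']; rfl)
          rw [if_neg (by rw [hTB]; exact hAB.symm), if_pos hTB,
            if_neg (by rw [hTB]; exact hBC), if_neg (by rw [hTB]; exact hBD)]
          norm_num
        · -- c = l, T = {i,j,k} = A
          have hcl : c = l := Finset.mem_singleton.mp hcS'''
          have hT' : (T : Finset (Fin n)) = {i, j, k} := by
            rw [hT, hcl, Finset.erase_insert_of_ne hil,
              Finset.erase_insert_of_ne hjl, Finset.erase_insert_of_ne hkl,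
              Finset.erase_singleton]
            simp
          have hTA : T = A := Subtype.ext (by rw [hT']; rfl)
          rw [if_pos hTA, if_neg (by rw [hTA]; exact hAB), if_neg (by rw [hTA]; exact hAC),
            if_neg (by rw [hTA]; exact hAD)]
          norm_num
  · rw [if_neg hsub, if_neg (fun h => hsub (by rw [h]; exact hsubA)),
      if_neg (fun h => hsub (by rw [h]; exact hsubB)),
      if_neg (fun h => hsub (by rw [h]; exact hsubC)),
      if_neg (fun h => hsub (by rw [h]; exact hsubD))]
    norm_num

end DeltaAux

namespace DeltaAux

variable {n : ℕ} [NeZero n]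

lemma fin_pos_of_ne {i : Fin n} (h : i ≠ 0) : 0 < i :=
  lt_of_le_of_ne (Fin.zero_le i) (Ne.symm h)

lemma closure_lambda (n : ℕ) [NeZero n] : Subgroup.closure (LambdaDelta n) = ⊤ := by
  rw [eq_top_iff]
  intro x _
  refine PresentedGroup.generated_by _ _ (fun q => ?_) x
  show dd q ∈ Subgroup.closure (LambdaDelta n)
  by_cases hq : qInc q
  · obtain ⟨i, j, k, l⟩ := q
    obtain ⟨h1, h2, h3⟩ := hq
    rcases eq_or_ne i 0 with rfl | hi0
    · exact Subgroup.subset_closure ⟨0, j, k, l, by simp, h1, h2, h3, rfl⟩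
    · have h0 : (0 : Fin n) < i := fin_pos_of_ne hi0
      have hp := dd_pentagon h0 h1 h2 h3
      set A := dd ((0 : Fin n), i, j, k)
      set B := dd ((0 : Fin n), i, k, l)
      set C := dd ((0 : Fin n), i, j, l)
      set D := dd ((0 : Fin n), j, k, l)
      -- hp : A * B * dd (i,j,k,l) * C * D = 1
      have hX : dd (i, j, k, l) = (A * B)⁻¹ * 1 * (C * D)⁻¹ := by
        rw [← hp]; group
      have hA : A ∈ Subgroup.closure (LambdaDelta n) :=
        Subgroup.subset_closure ⟨0, i, j, k, by simp, h0, h1, h2, rfl⟩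
      have hB : B ∈ Subgroup.closure (LambdaDelta n) :=
        Subgroup.subset_closure ⟨0, i, k, l, by simp, h0, h1.trans h2, h3, rfl⟩
      have hC : C ∈ Subgroup.closure (LambdaDelta n) :=
        Subgroup.subset_closure ⟨0, i, j, l, by simp, h0, h1, h2.trans h3, rfl⟩
      have hD : D ∈ Subgroup.closure (LambdaDelta n) :=
        Subgroup.subset_closure ⟨0, j, k, l, by simp, h0.trans h1, h2, h3, rfl⟩
      rw [hX]
      exact mul_mem (mul_mem (inv_mem (mul_mem hA hB)) (one_mem _))
        (inv_mem (mul_mem hC hD))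
  · rw [dd_not_inc hq]
    exact one_mem _

lemma lambda_eq_range (n : ℕ) [NeZero n] :
    LambdaDelta n = Set.range fun T : Idx n => dd (idxQuad T) := by
  ext x
  constructor
  · rintro ⟨a, j, k, l, ha, h1, h2, h3, rfl⟩
    have ha0 : a = 0 := Fin.ext (by simpa using ha)
    subst ha0
    refine ⟨mkIdx h1 h2 h3, ?_⟩
    show dd (idxQuad (mkIdx h1 h2 h3)) = dd (0, j, k, l)
    rw [idxQuad_mk h1 h2 h3]
  · rintro ⟨T, rfl⟩
    exact ⟨0, idxE T 0, idxE T 1, idxE T 2, by simp, idxE_pos T 0, (idxE_lt T).1,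
      (idxE_lt T).2, rfl⟩

lemma dd_idxQuad_inj (n : ℕ) [NeZero n] :
    Function.Injective fun T : Idx n => dd (idxQuad T) := by
  intro T1 T2 h
  have h1 := congrArg (phi n) h
  rw [phi_g, phi_g] at h1
  have h2 := congrFun (Multiplicative.ofAdd.injective h1) T1
  rw [Pi.single_eq_same] at h2
  by_contra hne
  rw [Pi.single_eq_of_ne hne] at h2
  exact one_ne_zero h2

lemma ncard_lambda (n : ℕ) [NeZero n] : (LambdaDelta n).ncard = (n - 1).choose 3 := by
  rw [lambda_eq_range, ← Set.image_univ, Set.ncard_image_of_injective _ (dd_idxQuad_inj n),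
    Set.ncard_univ, Nat.card_eq_fintype_card, cardIdx]

lemma phi_surjective (n : ℕ) [NeZero n] : Function.Surjective (phi n) := by
  rw [← MonoidHom.range_eq_top]
  have htop : Subgroup.closure
      (Set.range fun T : Idx n => Multiplicative.ofAdd (Pi.single T (1 : ZMod 2))) = ⊤ := by
    rw [closure_range_eq_range_Psi _ fun T => mul_self_pi_zmod2 _, MonoidHom.range_eq_top]
    intro f
    exact ⟨f, Psi_pi f⟩
  rw [eq_top_iff, ← htop, Subgroup.closure_le]
  rintro - ⟨T, rfl⟩
  exact MonoidHom.mem_range.mpr ⟨dd (idxQuad T), phi_g T⟩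

lemma lower_bound (n : ℕ) [NeZero n] (S : Set (Delta n)) (hfin : S.Finite)
    (hgen : Subgroup.closure S = ⊤) : (n - 1).choose 3 ≤ S.ncard := by
  classical
  haveI := hfin.fintype
  set x : S → Multiplicative (Idx n → ZMod 2) := fun s => phi n s.1 with hx
  have hrange : Set.range x = phi n '' S := (Set.image_eq_range _ _).symm
  have h1 : Subgroup.closure (Set.range x) = ⊤ := by
    rw [hrange, ← MonoidHom.map_closure, hgen, ← MonoidHom.range_eq_map,
      MonoidHom.range_eq_top]
    exact phi_surjective n
  have hsq : ∀ s : S, x s * x s = 1 := fun s => mul_self_pi_zmod2 _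
  have h2 : Function.Surjective (Psi x hsq) := by
    rw [← MonoidHom.range_eq_top, ← closure_range_eq_range_Psi x hsq]
    exact h1
  have h3 := Fintype.card_le_of_surjective _ h2
  have cardG : Fintype.card (Multiplicative (Idx n → ZMod 2)) = 2 ^ Fintype.card (Idx n) := by
    simp [Fintype.card_pi, ZMod.card, Finset.card_univ]
  have cardS : Fintype.card (Multiplicative (↥S → ZMod 2)) = 2 ^ Fintype.card ↥S := by
    simp [Fintype.card_pi, ZMod.card, Finset.card_univ]
  rw [cardG, cardS] at h3
  have h4 : Fintype.card (Idx n) ≤ Fintype.card ↥S :=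
    (Nat.pow_le_pow_iff_right one_lt_two).mp h3
  rw [← cardIdx n]
  rwa [← Nat.card_coe_set_eq, Nat.card_eq_fintype_card]

set_option maxHeartbeats 1000000 in
lemma abelianization_iso (n : ℕ) [NeZero n] :
    Nonempty (Abelianization (Delta n) ≃* Multiplicative (Idx n → ZMod 2)) := by
  classical
  set xg : Idx n → Abelianization (Delta n) :=
    (fun T => Abelianization.of (dd (idxQuad T))) with hxgdef
  have hxg : ∀ T, xg T * xg T = 1 := fun T => by
    rw [hxgdef, ← map_mul, dd_sq, map_one]
  set psi := Psi xg hxg with hpsidef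
  set phiAb := Abelianization.lift (phi n) with hphiAbdef
  have hof_sq : ∀ q : Quad n, Abelianization.of (dd q) * Abelianization.of (dd q) = 1 :=
    fun q => by rw [← map_mul, dd_sq, map_one]
  have hFG : psi.comp (phiAb.comp Abelianization.of)
      = (Abelianization.of : Delta n →* Abelianization (Delta n)) := by
    apply PresentedGroup.ext
    intro q
    simp only [MonoidHom.comp_apply]
    show psi (phiAb (Abelianization.of (dd q))) = Abelianization.of (dd q)
    rw [hphiAbdef, Abelianization.lift_apply_of]
    by_cases hq : qInc q
    · obtain ⟨i, j, k, l⟩ := q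
      obtain ⟨h1, h2, h3⟩ := hq
      rcases eq_or_ne i 0 with rfl | hi0
      · rw [phi_of, fgen_zero h1 h2 h3, hpsidef, Psi_single, hxgdef]
        show Abelianization.of (dd (idxQuad (mkIdx h1 h2 h3))) = _
        rw [idxQuad_mk h1 h2 h3]
      · have h0 : (0 : Fin n) < i := fin_pos_of_ne hi0
        rw [phi_of, fgen_pos h0 h1 h2 h3]
        simp only [ofAdd_add, map_mul]
        rw [hpsidef, Psi_single, Psi_single, Psi_single, Psi_single, hxgdef]
        show Abelianization.of (dd (idxQuad (mkIdx h0 h1 h2)))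
            * Abelianization.of (dd (idxQuad (mkIdx h0 h1 (h2.trans h3))))
            * Abelianization.of (dd (idxQuad (mkIdx h0 (h1.trans h2) h3)))
            * Abelianization.of (dd (idxQuad (mkIdx (h0.trans h1) h2 h3))) = _
        rw [idxQuad_mk, idxQuad_mk, idxQuad_mk, idxQuad_mk]
        -- now use the pentagon relation
        have hp := congrArg Abelianization.of (dd_pentagon h0 h1 h2 h3)
        rw [map_mul, map_mul, map_mul, map_mul, map_one] at hp
        set a := Abelianization.of (dd ((0 : Fin n), i, j, k))
        set b := Abelianization.of (dd ((0 : Fin n), i, j, l))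
        set c := Abelianization.of (dd ((0 : Fin n), i, k, l))
        set d := Abelianization.of (dd ((0 : Fin n), j, k, l))
        set y := Abelianization.of (dd (i, j, k, l))
        -- hp : a * c * y * b * d = 1
        have hy : y = c⁻¹ * a⁻¹ * 1 * d⁻¹ * b⁻¹ := by rw [← hp]; group
        rw [hy, inv_eq_of_mul_eq_one_right (hof_sq _), inv_eq_of_mul_eq_one_right (hof_sq _),
          inv_eq_of_mul_eq_one_right (hof_sq _), inv_eq_of_mul_eq_one_right (hof_sq _)]
        simp only [mul_one, one_mul]
        simp [mul_comm, mul_left_comm, mul_assoc]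
        rfl
    · rw [dd_not_inc hq, map_one, map_one, map_one]
  have hcomp1 : psi.comp phiAb = MonoidHom.id (Abelianization (Delta n)) := by
    apply Abelianization.hom_ext
    rw [MonoidHom.comp_assoc, hFG]
    rfl
  have hcomp2 : phiAb.comp psi = MonoidHom.id (Multiplicative (Idx n → ZMod 2)) := by
    apply MonoidHom.ext
    intro f
    show phiAb (psi f) = f
    have hstep : phiAb (psi f) = ∏ T,
        (Multiplicative.ofAdd (Pi.single T (1 : ZMod 2) : Idx n → ZMod 2))
        ^ (Multiplicative.toAdd f T).val := by
      rw [hpsidef, Psi_apply, map_prod]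
      refine Finset.prod_congr rfl fun T _ => ?_
      rw [map_pow, hphiAbdef, hxgdef, Abelianization.lift_apply_of, phi_g]
    rw [hstep, prod_single_pow]
  exact ⟨MonoidHom.toMulEquiv phiAb psi hcomp1 hcomp2⟩

end DeltaAux


open DeltaAux in
/-- For every `n ≥ 4`: (a) the set `Λ' = {(1jkl) : 2 ≤ j < k < l ≤ n}` generates `Δ_n^4`;
(b) every generating set of `Δ_n^4` has at least `N'_n = C(n-1,3)` elements and `Λ'` has
exactly `N'_n` elements, so `Λ'` is a minimal generating set; and (c) the abelianization of
`Δ_n^4` is isomorphic to `(ℤ/2ℤ)^{N'_n}`. -/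
theorem delta_min_generators_abelianization (n : ℕ) (hn : 4 ≤ n) :
    Subgroup.closure (LambdaDelta n) = ⊤ ∧
    (∀ S : Set (Delta n), S.Finite → Subgroup.closure S = ⊤ →
      (n - 1).choose 3 ≤ S.ncard) ∧
    (LambdaDelta n).ncard = (n - 1).choose 3 ∧
    Nonempty (Abelianization (Delta n) ≃*
      Multiplicative (Fin ((n - 1).choose 3) → ZMod 2)) := by
  haveI : NeZero n := ⟨by omega⟩
  refine ⟨closure_lambda n, fun S hfin hgen => lower_bound n S hfin hgen, ncard_lambda n, ?_⟩
  obtain ⟨e⟩ := abelianization_iso n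
  exact ⟨e.trans (reindexMul (Fintype.equivFinOfCardEq (cardIdx n)))⟩
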